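/- arXiv:1208.3393 — 3 statements merged into one kernel-verified Lean document; each statement's English description precedes it below -/
import Mathlib

section
/- Let $x \geq 1$ be a real number and $p$ a positive integer. For any integer $k$ with $-(p-1)/2 \le k \le (p-1)/2$, define $F_k(x) = \sum_{r \in \mathbb{Z}} \exp\left(-\pi \left(\frac{k}{p} + r\right)^2 x^2\right)$. Then there is an absolute constant $C > 0$ such that $F_k(x) \le C \exp\left(-\frac{|k|}{p} x\right)$. -/
open Real

noncomputable def F (p : ℕ) (k : ℤ) (x : ℝ) : ℝ :=
  ∑' r : ℤ, Real.exp (-π * ((k : ℝ) / p + r) ^ 2 * x ^ 2)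

lemma gauss_summable : Summable (fun r : ℤ ↦ Real.exp (-(r:ℝ)^2/4)) := by
  have := summable_pow_mul_jacobiTheta₂_term_bound 0 (T := 1/(4*π)) (by positivity) 0
  refine this.congr fun n => ?_
  have hπ : (π:ℝ) ≠ 0 := pi_ne_zero
  rw [pow_zero, one_mul]
  congr 1
  field_simp
  ring

lemma key_term (x t' : ℝ) (hx : 1 ≤ x) (ht : |t'| ≤ 1/2) (r : ℤ) :
    Real.exp (-π * (t' + r)^2 * x^2) ≤
      Real.exp (1/(4*π)) * Real.exp (-(|t'| * x)) * Real.exp (-(r:ℝ)^2/4) := by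
  rw [← Real.exp_add, ← Real.exp_add, Real.exp_le_exp]
  have hπ : (3.14:ℝ) < π := by linarith [pi_gt_d6]
  have hs : (0:ℝ) ≤ |t'| := abs_nonneg _
  have hq : (0:ℝ) < 1/(4*π) := by positivity
  rcases eq_or_ne r 0 with hr | hr
  · subst hr
    push_cast
    set u := |t'| * x with hu
    have h4 : 4*π*(1/(4*π)) = 1 := by field_simp
    have hu0 : 0 ≤ 4*π*(π*u^2 + 1/(4*π) - u) := by nlinarith [sq_nonneg (2*π*u - 1)]
    have ha : 0 ≤ π*u^2 + 1/(4*π) - u := by nlinarith [pi_pos]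
    have hb : u^2 = t'^2 * x^2 := by rw [hu, mul_pow, sq_abs]
    nlinarith [ha]
  · have h1 : (1:ℝ) ≤ |(r:ℝ)| := by
      rw [← Int.cast_abs]
      exact_mod_cast Int.one_le_abs hr
    have h2 : |(r:ℝ)| - |t'| ≤ |t' + r| := by
      calc |(r:ℝ)| - |t'| ≤ |(r:ℝ) + t'| := by
              have := abs_sub_abs_le_abs_sub (r:ℝ) (-t')
              simpa using this
        _ = |t' + r| := by rw [add_comm]
    have h3 : ((r:ℝ)/2)^2 ≤ (t' + r)^2 := by
      rw [← sq_abs (t' + r)]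
      have ha : |(r:ℝ)|/2 ≤ |t' + r| := by linarith
      have hb : ((r:ℝ)/2)^2 = (|(r:ℝ)|/2)^2 := by rw [div_pow, div_pow, sq_abs]
      rw [hb]
      exact pow_le_pow_left₀ (by linarith) ha 2
    have hr2 : (1:ℝ) ≤ (r:ℝ)^2 := by
      rw [← sq_abs]; nlinarith [h1]
    have hx1 : (1:ℝ) ≤ x^2 := by nlinarith
    have step1 : |t'| * x ≤ (r:ℝ)^2 * x^2 / 2 := by
      nlinarith [hr2, sq_nonneg x, hx, mul_le_mul_of_nonneg_right ht (by linarith : (0:ℝ) ≤ x)]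
    have step2 : (r:ℝ)^2 * x^2 / 2 + (r:ℝ)^2 / 4 ≤ π * (t'+r)^2 * x^2 := by
      have hh := mul_le_mul_of_nonneg_left (mul_le_mul_of_nonneg_right h3 (sq_nonneg x)) pi_pos.le
      nlinarith [hh, hr2, hx1, sq_nonneg ((r:ℝ)*x), mul_le_mul_of_nonneg_left hx1 (sq_nonneg (r:ℝ))]
    nlinarith [step1, step2, hq]

theorem F_bound :
    ∃ C > 0, ∀ (x : ℝ), 1 ≤ x → ∀ (p : ℕ), 0 < p → ∀ k : ℤ,
      |(k : ℝ)| ≤ ((p : ℝ) - 1) / 2 →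
      F p k x ≤ C * Real.exp (-(|(k : ℝ)| / p) * x) := by
  refine ⟨Real.exp (1/(4*π)) * ∑' r : ℤ, Real.exp (-(r:ℝ)^2/4), ?_, ?_⟩
  · exact mul_pos (exp_pos _)
      (Summable.tsum_pos gauss_summable (fun i => (exp_pos _).le) 0 (exp_pos _))
  · intro x hx p hp k hk
    set t' := (k:ℝ)/p with ht'
    have hp0 : (0:ℝ) < p := by exact_mod_cast hp
    have habs : |t'| = |(k:ℝ)|/p := by rw [ht', abs_div, abs_of_pos hp0]
    have ht : |t'| ≤ 1/2 := by
      rw [habs, div_le_iff₀ hp0]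
      nlinarith [hk, hp0]
    have hsum2 : Summable (fun r : ℤ =>
        Real.exp (1/(4*π)) * Real.exp (-(|t'| * x)) * Real.exp (-(r:ℝ)^2/4)) := by
      simpa [mul_assoc] using
        (gauss_summable.mul_left (Real.exp (1/(4*π)) * Real.exp (-(|t'| * x))))
    have hsum1 : Summable (fun r : ℤ => Real.exp (-π * (t' + r)^2 * x^2)) :=
      Summable.of_nonneg_of_le (fun r => (exp_pos _).le) (key_term x t' hx ht) hsum2
    have hle : F p k x ≤ ∑' r : ℤ,
        Real.exp (1/(4*π)) * Real.exp (-(|t'| * x)) * Real.exp (-(r:ℝ)^2/4) :=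
      Summable.tsum_le_tsum (key_term x t' hx ht) hsum1 hsum2
    rw [tsum_mul_left] at hle
    have hxeq : -(|(k:ℝ)|/p) * x = -(|t'| * x) := by rw [habs]; ring
    rw [hxeq]
    calc F p k x ≤ _ := hle
      _ = (Real.exp (1/(4*π)) * ∑' r : ℤ, Real.exp (-(r:ℝ)^2/4)) *
          Real.exp (-(|t'| * x)) := by ring
end

section
/- Let $p$ be a positive integer and $M_1, M_2$ integers with $M_1 \not\equiv M_2 \pmod{p}$. Let $x \geq 1$ and set $F_k(x) = \sum_{r \in \mathbb{Z}} \exp(-\pi (k/p + r)^2 x^2)$ for $|k| \le (p-1)/2$. Then there is an absolute constant $C > 0$ such that $\left|\sum_{k=-(p-1)/2}^{(p-1)/2} F_k(x)\, e\left(k \cdot \frac{M_1 - M_2}{p}\right)\right| \le C \left\| \frac{M_1 - M_2}{p} \right\|^{-1}$, where $e(z) = e^{2\pi i z}$ and $\|z\|$ denotes the distance from $z$ to the nearest integer. -/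
open Real

noncomputable def e (z : ℝ) : ℂ := Complex.exp (2 * (π : ℂ) * Complex.I * (z : ℂ))

/-- distance to the nearest integer -/
noncomputable def nint (z : ℝ) : ℝ := |z - round z|

-- Summability of shifted Gaussians over ℕ
lemma gauss_summable_nat (c d : ℝ) (hc : 0 < c) :
    Summable (fun j : ℕ => rexp (-c * ((j : ℝ) - d) ^ 2)) := by
  have hg : Summable (fun j : ℕ => rexp (c * d ^ 2) * rexp (-(c / 2)) ^ j) :=
    (summable_geometric_of_lt_one (Real.exp_pos _).le
      (Real.exp_lt_one_iff.2 (by linarith))).mul_left _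
  have hle : ∀ j : ℕ, rexp (-c * ((j : ℝ) - d) ^ 2) ≤ rexp (c * d ^ 2) * rexp (-(c / 2)) ^ j := by
    intro j
    rw [← Real.exp_nat_mul, ← Real.exp_add]
    apply Real.exp_le_exp.2
    have hj : (j : ℝ) ≤ (j : ℝ) ^ 2 := by
      have : j ≤ j ^ 2 := Nat.le_self_pow two_ne_zero j
      exact_mod_cast this
    nlinarith [sq_nonneg ((j : ℝ) - 2 * d)]
  exact Summable.of_nonneg_of_le (fun j => (Real.exp_pos _).le) hle hg

lemma gauss_summable_int (c d : ℝ) (hc : 0 < c) :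
    Summable (fun n : ℤ => rexp (-c * ((n : ℝ) - d) ^ 2)) := by
  apply Summable.of_nat_of_neg
  · exact (gauss_summable_nat c d hc).congr (by intro j; norm_num)
  · refine ((gauss_summable_nat c (-d) hc).congr ?_)
    intro j
    have : ((-(j : ℤ) : ℤ) : ℝ) - d = -((j : ℝ) - (-d)) := by push_cast; ring
    rw [this, neg_sq]

lemma u_exp_le_one {u : ℝ} (hu : 0 ≤ u) : u * rexp (-(π * u ^ 2)) ≤ 1 := by
  have h1 : 1 + π * u ^ 2 ≤ rexp (π * u ^ 2) := by
    have := Real.add_one_le_exp (π * u ^ 2); linarith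
  have h2 : rexp (-(π * u ^ 2)) * rexp (π * u ^ 2) = 1 := by
    rw [← Real.exp_add]; simp
  have h3 : (0:ℝ) < rexp (-(π * u ^ 2)) := Real.exp_pos _
  have hπ := Real.pi_gt_three
  have hpos : (0:ℝ) < 1 + π * u ^ 2 := by positivity
  have h4 : rexp (-(π * u ^ 2)) * (1 + π * u ^ 2) ≤ 1 := by nlinarith
  have h5 : u ≤ 1 + π * u ^ 2 := by nlinarith [sq_nonneg (u - 1/3), sq_nonneg u]
  nlinarith [mul_le_mul_of_nonneg_left h4 hu]

set_option maxHeartbeats 1600000 in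
lemma gauss_nat_sum_bound (s : ℝ) (hs : 0 < s) :
    ∑' j : ℕ, rexp (-(π * s ^ 2) * (j : ℝ) ^ 2) ≤ ((⌈1/s⌉₊ : ℝ) + 1) + 1/(2*π*s) := by
  have hc0 : 0 < π * s ^ 2 := by positivity
  have hsum : Summable (fun j : ℕ => rexp (-(π * s ^ 2) * (j : ℝ) ^ 2)) := by
    exact (gauss_summable_nat (π * s ^ 2) 0 hc0).congr (fun j => by rw [sub_zero])
  set N : ℕ := ⌈1/s⌉₊ with hN
  have hsN : 1 ≤ s * N := by
    have h1 : 1/s ≤ (N : ℝ) := Nat.le_ceil _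
    have : 1/s * s ≤ (N:ℝ) * s := by nlinarith
    calc (1:ℝ) = 1/s * s := by field_simp
    _ ≤ (N:ℝ) * s := this
    _ = s * N := by ring
  have hshift : Summable (fun i : ℕ => rexp (-(π * s ^ 2) * ((i + (N+1) : ℕ) : ℝ) ^ 2)) :=
    (summable_nat_add_iff (N+1)).2 hsum
  rw [← Summable.sum_add_tsum_nat_add' hshift]
  have hpart1 : ∑ i ∈ Finset.range (N+1), rexp (-(π * s ^ 2) * (i : ℝ) ^ 2) ≤ (N : ℝ) + 1 := by
    calc ∑ i ∈ Finset.range (N+1), rexp (-(π * s ^ 2) * (i : ℝ) ^ 2)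
        ≤ ∑ i ∈ Finset.range (N+1), 1 := by
          apply Finset.sum_le_sum
          intro i _
          apply Real.exp_le_one_iff.2
          have : (0:ℝ) ≤ (i:ℝ)^2 := sq_nonneg _
          nlinarith
    _ = (N : ℝ) + 1 := by simp [Finset.sum_const]
  have hr0 : (0:ℝ) < rexp (-(2*π*s)) := Real.exp_pos _
  have hr1 : rexp (-(2*π*s)) < 1 := by
    apply Real.exp_lt_one_iff.2; have : (0:ℝ) < 2*π*s := by positivity
    linarith
  have hgeom : Summable (fun i : ℕ => rexp (-(2*π*s)) ^ i * rexp (-(2*π*s))) :=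
    (summable_geometric_of_lt_one hr0.le hr1).mul_right _
  have hpart2 : ∑' i : ℕ, rexp (-(π * s ^ 2) * ((i + (N+1) : ℕ) : ℝ) ^ 2) ≤ 1/(2*π*s) := by
    have hle : ∀ i : ℕ, rexp (-(π * s ^ 2) * ((i + (N+1) : ℕ) : ℝ) ^ 2)
        ≤ rexp (-(2*π*s)) ^ i * rexp (-(2*π*s)) := by
      intro i
      rw [← Real.exp_nat_mul, ← Real.exp_add]
      apply Real.exp_le_exp.2
      push_cast
      set m := (i : ℝ); set n := (N : ℝ)
      have hm : 0 ≤ m := Nat.cast_nonneg i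
      have hn : 0 ≤ n := Nat.cast_nonneg N
      have e1 : 2*n*(m+1) ≤ (m+n+1)^2 := by nlinarith [sq_nonneg (m-n+1)]
      have e2 : 2*(m+1) ≤ s*(m+n+1)^2 := by nlinarith [mul_le_mul_of_nonneg_left e1 hs.le]
      have hπ := Real.pi_pos
      nlinarith [mul_le_mul_of_nonneg_left e2 (mul_pos hπ hs).le]
    calc ∑' i : ℕ, rexp (-(π * s ^ 2) * ((i + (N+1) : ℕ) : ℝ) ^ 2)
        ≤ ∑' i : ℕ, rexp (-(2*π*s)) ^ i * rexp (-(2*π*s)) :=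
          Summable.tsum_le_tsum hle hshift hgeom
    _ = (1 - rexp (-(2*π*s)))⁻¹ * rexp (-(2*π*s)) := by
          rw [tsum_mul_right, tsum_geometric_of_lt_one hr0.le hr1]
    _ ≤ 1/(2*π*s) := by
          rw [inv_mul_eq_div, div_le_div_iff₀ (by linarith) (by positivity)]
          have h2 : rexp (-(2*π*s)) * rexp (2*π*s) = 1 := by rw [← Real.exp_add]; simp
          have h3 := Real.add_one_le_exp (2*π*s)
          nlinarith
  linarith [hpart1, hpart2]


set_option maxHeartbeats 1600000 in
lemma key_bound (s α : ℝ) (hs : 0 < s) (hβ0 : 0 < |α - round α|) :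
    s * ∑' n : ℤ, rexp (-(π * s ^ 2) * ((n : ℝ) - α) ^ 2) ≤ 12 / |α - round α| := by
  have hc0 : 0 < π * s ^ 2 := by positivity
  set c : ℝ := π * s ^ 2 with hcdef
  set δ : ℝ := α - round α with hδ
  have hβ2 : |δ| ≤ 1/2 := abs_sub_round α
  -- reindex
  have hre : ∑' n : ℤ, rexp (-c * ((n : ℝ) - α) ^ 2)
      = ∑' m : ℤ, rexp (-c * ((m : ℝ) - δ) ^ 2) := by
    rw [← (Equiv.addRight (round α : ℤ)).tsum_eq
      (fun n : ℤ => rexp (-c * ((n : ℝ) - α) ^ 2))]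
    apply tsum_congr
    intro m
    have : ((Equiv.addRight (round α : ℤ)) m : ℝ) - α = (m : ℝ) - δ := by
      simp only [Equiv.coe_addRight]
      push_cast
      rw [hδ]; ring
    rw [this]
  have hsum1 : Summable (fun m : ℤ => rexp (-c * ((m : ℝ) - δ) ^ 2)) :=
    gauss_summable_int c δ hc0
  rw [hre, Summable.tsum_eq_add_tsum_ite hsum1 0]
  -- bound the tail
  have hgs : Summable (fun m : ℤ => rexp (-c * (|(m : ℝ)| - 1) ^ 2)) := by
    apply Summable.of_nat_of_neg
    · refine (gauss_summable_nat c 1 hc0).congr (fun j => ?_)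
      simp only [Int.cast_natCast, Nat.abs_cast]
    · refine (gauss_summable_nat c 1 hc0).congr (fun j => ?_)
      simp only [Int.cast_neg, Int.cast_natCast, abs_neg, Nat.abs_cast]
  have hsum_ite : Summable (fun m : ℤ => if m = 0 then (0:ℝ) else rexp (-c * ((m:ℝ) - δ) ^ 2)) := by
    apply hsum1.summable_of_eq_zero_or_self
    intro m
    by_cases hm : m = 0 <;> simp [hm]
  have htail : ∑' m : ℤ, (if m = 0 then (0:ℝ) else rexp (-c * ((m:ℝ) - δ) ^ 2))
      ≤ rexp (-c * δ ^ 2) * ∑' m : ℤ, rexp (-c * (|(m : ℝ)| - 1) ^ 2) := by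
    rw [← tsum_mul_left]
    apply Summable.tsum_le_tsum _ hsum_ite (hgs.mul_left _)
    intro m
    by_cases hm : m = 0
    · simp only [hm, if_pos rfl]
      positivity
    · rw [if_neg hm, ← Real.exp_add]
      apply Real.exp_le_exp.2
      have h1 : (1:ℝ) ≤ |(m:ℝ)| := by
        have : (1:ℤ) ≤ |m| := Int.one_le_abs hm
        calc (1:ℝ) = ((1:ℤ):ℝ) := by norm_num
        _ ≤ ((|m|:ℤ):ℝ) := by exact_mod_cast this
        _ = |(m:ℝ)| := by push_cast; rfl
      have hmd : (m:ℝ) * δ ≤ |(m:ℝ)| * |δ| := by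
        calc (m:ℝ) * δ ≤ |(m:ℝ) * δ| := le_abs_self _
        _ = |(m:ℝ)| * |δ| := abs_mul _ _
      have hkey : δ ^ 2 + (|(m:ℝ)| - 1) ^ 2 ≤ ((m:ℝ) - δ) ^ 2 := by
        have hsq : |(m:ℝ)| ^ 2 = (m:ℝ) ^ 2 := sq_abs _
        nlinarith [mul_nonneg (by linarith : (0:ℝ) ≤ |(m:ℝ)| - 1)
          (by linarith : (0:ℝ) ≤ 1 - 2 * |δ|), abs_nonneg δ]
      nlinarith [mul_le_mul_of_nonneg_left hkey hc0.le]
  have hnat : Summable (fun j : ℕ => rexp (-c * ((j:ℝ) - 1) ^ 2)) := gauss_summable_nat c 1 hc0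
  have hnat0 : Summable (fun j : ℕ => rexp (-c * (j:ℝ) ^ 2)) :=
    (gauss_summable_nat c 0 hc0).congr (fun j => by rw [sub_zero])
  have hBsplit : ∑' m : ℤ, rexp (-c * (|(m : ℝ)| - 1) ^ 2)
      = (∑' j : ℕ, rexp (-c * ((j:ℝ) - 1) ^ 2)) + ∑' j : ℕ, rexp (-c * (j:ℝ) ^ 2) := by
    rw [tsum_of_nat_of_neg_add_one
      (hnat.congr (fun j => by simp only [Int.cast_natCast, Nat.abs_cast]))
      (hnat0.congr (fun j => by
        simp only [Int.cast_neg, Int.cast_natCast, abs_neg]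
        rw [abs_of_nonneg (by positivity)]
        push_cast; ring_nf))]
    congr 1
    · exact tsum_congr (fun j => by simp only [Int.cast_natCast, Nat.abs_cast])
    · exact tsum_congr (fun j => by
        simp only [Int.cast_neg, Int.cast_natCast, abs_neg]
        rw [abs_of_nonneg (by positivity)]
        push_cast; ring_nf)
  have hshift : ∑' j : ℕ, rexp (-c * ((j:ℝ) - 1) ^ 2)
      = rexp (-c) + ∑' j : ℕ, rexp (-c * (j:ℝ) ^ 2) := by
    rw [tsum_eq_zero_add' (hnat0.congr (fun j => by push_cast; ring_nf))]
    congr 1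
    · norm_num
    · exact tsum_congr (fun j => by push_cast; ring_nf)
  set A : ℝ := ∑' j : ℕ, rexp (-c * (j:ℝ) ^ 2) with hA
  set E : ℝ := rexp (-c * δ ^ 2) with hE
  set β : ℝ := |δ| with hβ
  have hApos : 0 ≤ A := tsum_nonneg (fun j => (Real.exp_pos _).le)
  have hAbound : A ≤ 1/s + 2 + 1/(2*π*s) := by
    have h1 := gauss_nat_sum_bound s hs
    have h2 : ((⌈1/s⌉₊ : ℝ)) < 1/s + 1 := Nat.ceil_lt_add_one (by positivity)
    rw [hA, hcdef]
    linarith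
  have hE1 : E ≤ 1 := Real.exp_le_one_iff.2 (by nlinarith [sq_nonneg δ])
  have hec : rexp (-c) ≤ 1 := Real.exp_le_one_iff.2 (by linarith)
  have hsE : s * E ≤ 1/β := by
    rw [le_div_iff₀ hβ0]
    have hcd : c * δ ^ 2 = π * (s * β) ^ 2 := by
      rw [hcdef, hβ, ← sq_abs δ]; ring
    have := u_exp_le_one (u := s * β) (by positivity)
    rw [hE, neg_mul, hcd]
    calc s * rexp (-(π * (s * β) ^ 2)) * β = s * β * rexp (-(π * (s * β) ^ 2)) := by ring
    _ ≤ 1 := this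
  have hm2 : s * A ≤ 2 + 2 * s := by
    have e : s * (1/s + 2 + 1/(2*π*s)) = 1 + 2*s + 1/(2*π) := by
      field_simp
    have h3 := mul_le_mul_of_nonneg_left hAbound hs.le
    have h4 : 1/(2*π) ≤ 1 := by
      rw [div_le_one (by positivity)]
      linarith [Real.pi_gt_three]
    linarith [e ▸ h3]
  have hfour : (4:ℝ) ≤ 2/β := by
    rw [le_div_iff₀ hβ0]
    linarith
  have h0δ : rexp (-c * (((0:ℤ):ℝ) - δ) ^ 2) = E := by
    rw [hE]; congr 1; push_cast; ring
  calc s * (rexp (-c * (((0:ℤ):ℝ) - δ) ^ 2)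
        + ∑' m : ℤ, (if m = 0 then (0:ℝ) else rexp (-c * ((m:ℝ) - δ) ^ 2)))
      ≤ s * (E + E * ((rexp (-c) + A) + A)) := by
        rw [h0δ]
        have := htail
        rw [hBsplit, hshift] at this
        nlinarith [this]
  _ = s * E * (1 + rexp (-c)) + s * E * (2 * A) := by ring
  _ ≤ 2 * (1/β) + (4 * E + 4 * (s * E)) := by
        have m1 : s * E * (1 + rexp (-c)) ≤ 2 * (1/β) := by
          nlinarith [mul_nonneg hs.le (Real.exp_pos (-c * δ ^ 2)).le]
        have m3 : s * E * (2 * A) ≤ 4 * E + 4 * (s * E) := by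
          nlinarith [mul_le_mul_of_nonneg_left hm2 (by positivity : (0:ℝ) ≤ 2 * E)]
        linarith
  _ ≤ 2 * (1/β) + (4 + 4 * (1/β)) := by
        have : 4 * E ≤ 4 := by linarith
        linarith [hsE]
  _ ≤ 12 / β := by
        have h2 : (4:ℝ) ≤ 2 * (1/β) := by rw [mul_one_div]; exact hfour
        have h5 : 0 ≤ 1/β := by positivity
        calc 2 * (1/β) + (4 + 4 * (1/β)) ≤ 2 * (1/β) + (2 * (1/β) + 4 * (1/β)) := by linarith
        _ = 8 * (1/β) := by ring
        _ ≤ 12 * (1/β) := by linarith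
        _ = 12 / β := by rw [mul_one_div]


lemma sum_tsum_shift {f : ℤ → ℂ} (hf : Summable f) (h : ℤ) (hh : 0 ≤ h) :
    ∑ k ∈ Finset.Icc (-h) h, ∑' r : ℤ, f (k + r * (2*h+1)) = ∑' n : ℤ, f n := by
  set p : ℤ := 2*h+1 with hp
  have hp0 : 0 < p := by omega
  let E : ({k // k ∈ Finset.Icc (-h) h} × ℤ) ≃ ℤ :=
  { toFun := fun q => (q.1 : ℤ) + q.2 * p
    invFun := fun n => (⟨(n + h) % p - h, by
      simp only [Finset.mem_Icc]
      have h1 := Int.emod_nonneg (n + h) (by omega : p ≠ 0)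
      have h2 := Int.emod_lt_of_pos (n + h) hp0
      omega⟩, (n + h) / p)
    left_inv := by
      rintro ⟨⟨k, hk⟩, r⟩
      simp only [Finset.mem_Icc] at hk
      have h1 : (k : ℤ) + r * p + h = (k + h) + p * r := by ring
      have h2 : ((k : ℤ) + r * p + h) % p = k + h := by
        rw [h1, Int.add_mul_emod_self_left, Int.emod_eq_of_lt (by omega) (by omega)]
      have h3 : ((k : ℤ) + r * p + h) / p = r := by
        rw [h1, Int.add_mul_ediv_left _ _ (by omega : p ≠ 0),
          Int.ediv_eq_zero_of_lt (by omega) (by omega), zero_add]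
      simp only [Prod.mk.injEq, Subtype.mk.injEq]
      refine ⟨by rw [h2]; ring, h3⟩
    right_inv := by
      intro n
      simp only
      have key := Int.emod_add_mul_ediv (n + h) p
      have : (n + h) % p - h + (n + h) / p * p = n := by
        rw [mul_comm]; linarith [key]
      exact this }
  have hfE : Summable (f ∘ E) := (Equiv.summable_iff E).2 hf
  have h1 : ∑' n : ℤ, f n = ∑' q : {k // k ∈ Finset.Icc (-h) h} × ℤ, f (E q) :=
    (E.tsum_eq f).symm
  have hfE' : Summable (fun q : {k // k ∈ Finset.Icc (-h) h} × ℤ => f (E q)) := hfE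
  rw [h1, Summable.tsum_prod hfE']
  rw [tsum_fintype]
  rw [← Finset.sum_coe_sort (Finset.Icc (-h) h) (fun k => ∑' r : ℤ, f (k + r * (2*h+1)))]
  apply Finset.sum_congr rfl
  intro k _
  rfl

set_option maxHeartbeats 1600000 in
theorem F_exp_sum_bound :
    ∃ C > 0, ∀ (p : ℕ), 0 < p → Odd p → ∀ (M₁ M₂ : ℤ), ¬ ((p : ℤ) ∣ (M₁ - M₂)) →
      ∀ (x : ℝ), 1 ≤ x →
      ‖∑ k ∈ Finset.Icc (-(((p : ℤ) - 1) / 2)) (((p : ℤ) - 1) / 2),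
          (F p k x : ℂ) * e ((k : ℝ) * (((M₁ : ℝ) - M₂) / p))‖
        ≤ C * (nint (((M₁ : ℝ) - M₂) / p))⁻¹ := by
  refine ⟨12, by norm_num, ?_⟩
  intro p hp hodd M₁ M₂ hdvd x hx
  set α : ℝ := ((M₁ : ℝ) - M₂) / p with hα
  have hp0 : (0:ℝ) < p := by exact_mod_cast hp
  have hpR : (p:ℝ) ≠ 0 := ne_of_gt hp0
  have hx0 : (0:ℝ) < x := lt_of_lt_of_le one_pos hx
  have hxR : x ≠ 0 := ne_of_gt hx0
  have hαp : α * p = (M₁ : ℝ) - M₂ := by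
    rw [hα]; field_simp
  obtain ⟨t, ht⟩ := hodd
  set h : ℤ := ((p:ℤ) - 1) / 2 with hh
  have ht' : (p:ℤ) = 2 * (t:ℤ) + 1 := by exact_mod_cast ht
  have hph : (p:ℤ) = 2 * h + 1 := by omega
  have hh0 : 0 ≤ h := by omega
  -- positivity of nint α
  have hβ0 : 0 < |α - round α| := by
    rcases eq_or_lt_of_le (abs_nonneg (α - round α)) with h0 | h0
    · exfalso
      have h1 : α = ((round α : ℤ) : ℝ) := by
        have := h0.symm
        rwa [abs_eq_zero, sub_eq_zero] at this
      apply hdvd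
      refine ⟨round α, ?_⟩
      have h2 : ((round α : ℤ) : ℝ) * p = (M₁ : ℝ) - M₂ := by rw [← h1]; exact hαp
      have h3 : ((M₁ - M₂ : ℤ) : ℝ) = (((p:ℤ) * round α : ℤ) : ℝ) := by push_cast; linarith
      exact_mod_cast h3
    · exact h0
  -- setup for theta transformation
  set ar : ℝ := (x / p) ^ 2 with har
  have har0 : 0 < ar := by positivity
  set a : ℂ := ((ar : ℝ) : ℂ) with ha
  have hare : 0 < a.re := by simp [ha, har0]
  set b : ℂ := Complex.I * (α : ℂ) with hb
  set g : ℤ → ℂ := fun n => Complex.exp (-(π:ℂ) * a * (n:ℂ) ^ 2 + 2 * (π:ℂ) * b * (n:ℂ)) with hg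
  have hgnorm : ∀ n : ℤ, ‖g n‖ = rexp (-(π * ar) * ((n:ℝ) - 0) ^ 2) := by
    intro n
    have hz : -(π:ℂ) * a * (n:ℂ) ^ 2 + 2 * (π:ℂ) * b * (n:ℂ)
        = ((-π * ar * (n:ℝ) ^ 2 : ℝ) : ℂ) + ((2 * π * α * (n:ℝ) : ℝ) : ℂ) * Complex.I := by
      rw [ha, hb]; push_cast; ring
    rw [show g n = Complex.exp (-(π:ℂ) * a * (n:ℂ) ^ 2 + 2 * (π:ℂ) * b * (n:ℂ)) from rfl, hz, Complex.norm_exp]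
    congr 1
    simp only [Complex.add_re, Complex.ofReal_re, Complex.mul_re, Complex.ofReal_im,
      Complex.I_re, Complex.I_im]
    ring
  have hgsum : Summable g := by
    apply Summable.of_norm
    exact (gauss_summable_int (π * ar) 0 (by positivity)).congr (fun n => (hgnorm n).symm)
  -- αp as complex
  have hαpC : (α : ℂ) * (p : ℂ) = (M₁ : ℂ) - (M₂ : ℂ) := by
    have := congrArg (Complex.ofReal) hαp
    push_cast at this ⊢
    exact_mod_cast this
  -- step 1 : rewrite each term
  have hstep1 : ∀ k ∈ Finset.Icc (-h) h,
      (F p k x : ℂ) * e ((k : ℝ) * α) = ∑' r : ℤ, g (k + r * (2 * h + 1)) := by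
    intro k _
    rw [F, Complex.ofReal_tsum, ← tsum_mul_right]
    apply tsum_congr
    intro r
    have hn : ((k + r * (2 * h + 1) : ℤ) : ℂ) = (k : ℂ) + (r : ℂ) * (p : ℂ) := by
      push_cast [← hph]
      ring
    rw [hg]
    simp only [hn]
    have hqR : -π * ((k : ℝ) / p + r) ^ 2 * x ^ 2 = -π * ar * ((k : ℝ) + r * p) ^ 2 := by
      rw [har]; field_simp
    have hq : -(π:ℂ) * a * ((k : ℂ) + (r : ℂ) * (p : ℂ)) ^ 2
        = ((-π * ((k : ℝ) / p + r) ^ 2 * x ^ 2 : ℝ) : ℂ) := by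
      rw [hqR, ha]
      push_cast
      ring
    have hl : 2 * (π:ℂ) * b * ((k : ℂ) + (r : ℂ) * (p : ℂ))
        = 2 * (π:ℂ) * Complex.I * (((k : ℝ) * α : ℝ) : ℂ)
          + ((r * (M₁ - M₂) : ℤ) : ℂ) * (2 * (π:ℂ) * Complex.I) := by
      rw [hb]
      push_cast
      linear_combination (2 * (π:ℂ) * Complex.I * (r:ℂ)) * hαpC
    have hsplit : -(π:ℂ) * a * ((k : ℂ) + (r : ℂ) * (p : ℂ)) ^ 2
        + 2 * (π:ℂ) * b * ((k : ℂ) + (r : ℂ) * (p : ℂ))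
        = ((-π * ((k : ℝ) / p + r) ^ 2 * x ^ 2 : ℝ) : ℂ)
          + 2 * (π:ℂ) * Complex.I * (((k : ℝ) * α : ℝ) : ℂ)
          + ((r * (M₁ - M₂) : ℤ) : ℂ) * (2 * (π:ℂ) * Complex.I) := by
      rw [hq, hl]; ring
    rw [hsplit, Complex.exp_add, Complex.exp_add]
    rw [Complex.exp_int_mul_two_pi_mul_I, mul_one]
    rw [e, Complex.ofReal_exp]
  rw [Finset.sum_congr rfl hstep1, sum_tsum_shift hgsum h hh0]
  -- step 2 : theta transformation
  rw [show (fun n : ℤ => g n) = fun n : ℤ => Complex.exp (-(π:ℂ) * a * (n:ℂ) ^ 2 + 2 * (π:ℂ) * b * (n:ℂ)) from rfl]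
  rw [Complex.tsum_exp_neg_quadratic hare b]
  -- step 3 : simplify to a real quantity
  have hIb : Complex.I * b = -(α : ℂ) := by
    rw [hb, ← mul_assoc, Complex.I_mul_I, neg_one_mul]
  have hterm : ∀ n : ℤ, Complex.exp (-(π:ℂ) / a * ((n:ℂ) + Complex.I * b) ^ 2)
      = ((rexp (-(π * (p/x) ^ 2) * ((n:ℝ) - α) ^ 2) : ℝ) : ℂ) := by
    intro n
    rw [hIb, Complex.ofReal_exp]
    congr 1
    rw [show (-(π * ((p:ℝ)/x) ^ 2) * ((n:ℝ) - α) ^ 2 : ℝ) = -π / ar * ((n:ℝ) - α) ^ 2 from by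
      rw [har]; field_simp; try ring]
    rw [ha]
    push_cast
    try ring
  rw [tsum_congr hterm]
  have hpow : a ^ (1/2 : ℂ) = ((x / p : ℝ) : ℂ) := by
    rw [ha, show (1/2 : ℂ) = ((1/2 : ℝ) : ℂ) by norm_num,
      ← Complex.ofReal_cpow har0.le]
    congr 1
    rw [har, ← Real.sqrt_eq_rpow]
    exact Real.sqrt_sq (by positivity)
  rw [hpow, ← Complex.ofReal_tsum]
  have hone : (1 : ℂ) / ((x / p : ℝ) : ℂ) = ((p / x : ℝ) : ℂ) := by
    rw [one_div, ← Complex.ofReal_inv]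
    congr 1
    rw [inv_div]
  rw [hone, ← Complex.ofReal_mul]
  -- step 4 : compute abs
  have hT0 : 0 ≤ (p / x) * ∑' n : ℤ, rexp (-(π * (p/x) ^ 2) * ((n:ℝ) - α) ^ 2) := by
    apply mul_nonneg (by positivity)
    exact tsum_nonneg (fun n => (Real.exp_pos _).le)
  rw [Complex.norm_real, Real.norm_eq_abs, abs_of_nonneg hT0]
  -- step 5 : key bound
  have hkey := key_bound (p / x) α (by positivity) hβ0
  have hnint : (12 : ℝ) * (nint α)⁻¹ = 12 / |α - round α| := by
    rw [nint, div_eq_mul_inv]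
  rw [hnint]
  exact hkey
end

section
/- Let $p$ be a prime and let $X, x$ be reals with $X \ge x \ge 1$ and $X \le p$. Let $k_0$ be a fixed integer, $J \geq 1$, and define $F_k(x) = \sum_{r \in \mathbb{Z}} \exp(-\pi (k/p + r)^2 x^2)$. Then for any real $\beta$, there is an absolute constant $C > 0$ with $\sum_{k = -(p-1)/2}^{(p-1)/2} F_k(x) \min\left\{ \left\| \frac{kX}{p} + \beta \right\|^{-1}, J \right\} \le C\left( \frac{X}{x} J + \frac{p}{x} \log p \right)$, where $\|z\|$ is the distance to the nearest integer and $\|z\|^{-1}$ is interpreted as $+\infty$ (so the min equals $J$) when $z$ is an integer. -/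
open Real
open scoped Classical

lemma apSum (θ c J : ℝ) (hθ : 0 < θ) (hJ : 0 ≤ J) (N : ℕ) (s : Finset ℤ)
    (hdiam : ∀ k ∈ s, ∀ k' ∈ s, (k - k').natAbs ≤ N)
    (g : ℤ → ℝ) (hg0 : ∀ k, 0 ≤ g k) (hgJ : ∀ k, g k ≤ J)
    (hginv : ∀ k ∈ s, 0 < |(k : ℝ) * θ + c| → g k ≤ |(k : ℝ) * θ + c|⁻¹) :
    ∑ k ∈ s, g k ≤ J + 4 / θ * (1 + Real.log N) := by
  classical
  have hlogN : 0 ≤ 1 + Real.log N := by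
    rcases Nat.eq_zero_or_pos N with h | h
    · simp [h]
    · have : (0:ℝ) ≤ Real.log N := Real.log_natCast_nonneg N
      linarith
  have hrhs0 : 0 ≤ 4 / θ * (1 + Real.log N) := by positivity
  rcases s.eq_empty_or_nonempty with rfl | hne
  · simpa using by linarith
  obtain ⟨k0, hk0, hmin⟩ := s.exists_min_image (fun k => |(k : ℝ) * θ + c|) hne
  have key : ∀ k ∈ s, k ≠ k0 → g k ≤ 2 / θ * ((((k - k0).natAbs : ℝ))⁻¹) := by
    intro k hk hne'
    set d : ℕ := (k - k0).natAbs with hd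
    have hd1 : 1 ≤ d := by
      have : k - k0 ≠ 0 := sub_ne_zero.mpr hne'
      omega
    have hdθ : (d : ℝ) * θ ≤ 2 * |(k : ℝ) * θ + c| := by
      have h1 : (d : ℝ) * θ = |((k : ℝ) * θ + c) - ((k0 : ℝ) * θ + c)| := by
        have : ((k : ℝ) * θ + c) - ((k0 : ℝ) * θ + c) = ((k - k0 : ℤ) : ℝ) * θ := by
          push_cast; ring
        rw [this, abs_mul, abs_of_pos hθ]
        congr 1
        rw [hd, Nat.cast_natAbs]; push_cast; ring_nf
      have h2 : |((k : ℝ) * θ + c) - ((k0 : ℝ) * θ + c)| ≤ |(k : ℝ) * θ + c| + |(k0 : ℝ) * θ + c| :=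
        abs_sub _ _
      have h3 := hmin k hk
      linarith
    have hpos : 0 < |(k : ℝ) * θ + c| := by
      have : 0 < (d:ℝ) * θ := by
        have : (1:ℝ) ≤ d := by exact_mod_cast hd1
        nlinarith
      linarith
    calc g k ≤ |(k : ℝ) * θ + c|⁻¹ := hginv k hk hpos
      _ ≤ ((d : ℝ) * θ / 2)⁻¹ := by
          apply inv_anti₀
          · positivity
          · linarith
      _ = 2 / θ * ((d : ℝ))⁻¹ := by
          field_simp
  -- sum over erase
  have hpart : ∀ P : Finset ℤ, P ⊆ s.erase k0 →
      (∀ k ∈ P, ∀ k' ∈ P, (k - k0).natAbs = (k' - k0).natAbs → k = k') →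
      ∑ k ∈ P, (((k - k0).natAbs : ℝ))⁻¹ ≤ 1 + Real.log N := by
    intro P hP hinj
    have himg : P.image (fun k => (k - k0).natAbs) ⊆ Finset.Icc 1 N := by
      intro d hd
      obtain ⟨k, hk, rfl⟩ := Finset.mem_image.mp hd
      have hks : k ∈ s := Finset.mem_of_mem_erase (hP hk)
      have hkne : k ≠ k0 := Finset.ne_of_mem_erase (hP hk)
      have h1 : 1 ≤ (k - k0).natAbs := by
        have : k - k0 ≠ 0 := sub_ne_zero.mpr hkne
        omega
      exact Finset.mem_Icc.mpr ⟨h1, hdiam k hks k0 hk0⟩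
    calc ∑ k ∈ P, (((k - k0).natAbs : ℝ))⁻¹
        = ∑ d ∈ P.image (fun k => (k - k0).natAbs), ((d : ℝ))⁻¹ := (Finset.sum_image (f := fun d : ℕ => ((d:ℝ))⁻¹) hinj).symm
      _ ≤ ∑ d ∈ Finset.Icc 1 N, ((d : ℝ))⁻¹ := by
          apply Finset.sum_le_sum_of_subset_of_nonneg himg
          intro d _ _; positivity
      _ = ((harmonic N : ℚ) : ℝ) := by rw [harmonic_eq_sum_Icc]; push_cast; ring
      _ ≤ 1 + Real.log N := harmonic_le_one_add_log N
  have hsplit : ∑ k ∈ s.erase k0, (((k - k0).natAbs : ℝ))⁻¹ ≤ 2 * (1 + Real.log N) := by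
    rw [← Finset.sum_filter_add_sum_filter_not (s.erase k0) (fun k => k0 < k)]
    have e1 := hpart ((s.erase k0).filter (fun k => k0 < k)) (Finset.filter_subset _ _)
      (by intro k hk k' hk' h
          have h1 := (Finset.mem_filter.mp hk).2
          have h2 := (Finset.mem_filter.mp hk').2
          omega)
    have e2 := hpart ((s.erase k0).filter (fun k => ¬ k0 < k)) (Finset.filter_subset _ _)
      (by intro k hk k' hk' h
          have h1 := (Finset.mem_filter.mp hk).2
          have h2 := (Finset.mem_filter.mp hk').2
          omega)
    linarith
  calc ∑ k ∈ s, g k = g k0 + ∑ k ∈ s.erase k0, g k := (Finset.add_sum_erase s g hk0).symm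
    _ ≤ J + ∑ k ∈ s.erase k0, 2 / θ * (((k - k0).natAbs : ℝ))⁻¹ := by
        apply add_le_add (hgJ k0)
        apply Finset.sum_le_sum
        intro k hk
        exact key k (Finset.mem_of_mem_erase hk) (Finset.ne_of_mem_erase hk)
    _ = J + 2 / θ * ∑ k ∈ s.erase k0, (((k - k0).natAbs : ℝ))⁻¹ := by
        rw [Finset.mul_sum]
    _ ≤ J + 2 / θ * (2 * (1 + Real.log N)) := by
        have h2θ : 0 ≤ 2 / θ := by positivity
        have := mul_le_mul_of_nonneg_left hsplit h2θ
        linarith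
    _ = J + 4 / θ * (1 + Real.log N) := by ring
lemma windowSum (θ β J : ℝ) (hθ : 0 < θ) (hJ : 0 ≤ J) (L : ℕ) (hLθ : (L : ℝ) * θ ≤ 2)
    (a : ℤ) (s : Finset ℤ) (hs : ∀ k ∈ s, a ≤ k ∧ k < a + L)
    (g : ℤ → ℝ) (hg0 : ∀ k, 0 ≤ g k) (hgJ : ∀ k, g k ≤ J)
    (hginv : ∀ k ∈ s, 0 < nint ((k : ℝ) * θ + β) → g k ≤ (nint ((k : ℝ) * θ + β))⁻¹) :
    ∑ k ∈ s, g k ≤ 5 * (J + 4 / θ * (1 + Real.log L)) := by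
  classical
  set m0 : ℤ := round ((a : ℝ) * θ + β) with hm0
  have hmaps : ∀ k ∈ s, round ((k : ℝ) * θ + β) ∈ Finset.Icc (m0 - 1) (m0 + 3) := by
    intro k hk
    obtain ⟨h1, h2⟩ := hs k hk
    have hza : (a : ℝ) * θ + β ≤ (k : ℝ) * θ + β := by
      have : (a : ℝ) ≤ k := by exact_mod_cast h1
      nlinarith
    have hzb : (k : ℝ) * θ + β ≤ (a : ℝ) * θ + β + 2 := by
      have : (k : ℝ) ≤ a + L := by exact_mod_cast h2.le
      nlinarith [hθ.le]
    have hr1 : |(k : ℝ) * θ + β - round ((k : ℝ) * θ + β)| ≤ 1/2 := by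
      simpa using abs_sub_round ((k : ℝ) * θ + β)
    have hr2 : |(a : ℝ) * θ + β - (m0 : ℝ)| ≤ 1/2 := by
      simpa [hm0] using abs_sub_round ((a : ℝ) * θ + β)
    rw [Finset.mem_Icc]
    constructor
    · have : ((m0 : ℝ) - 1) ≤ (round ((k : ℝ) * θ + β) : ℝ) := by
        have := abs_le.mp hr1
        have := abs_le.mp hr2
        push_cast
        linarith
      exact_mod_cast (by exact_mod_cast this : ((m0 - 1 : ℤ) : ℝ) ≤ (round ((k : ℝ) * θ + β) : ℝ))
    · have : (round ((k : ℝ) * θ + β) : ℝ) ≤ ((m0 : ℝ) + 3) := by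
        have := abs_le.mp hr1
        have := abs_le.mp hr2
        push_cast
        linarith
      exact_mod_cast (by exact_mod_cast this : ((round ((k : ℝ) * θ + β) : ℤ) : ℝ) ≤ ((m0 + 3 : ℤ) : ℝ))
  rw [← Finset.sum_fiberwise_of_maps_to hmaps g]
  have hbound : ∀ m ∈ Finset.Icc (m0 - 1) (m0 + 3),
      ∑ k ∈ s.filter (fun k : ℤ => round ((k : ℝ) * θ + β) = m), g k
        ≤ J + 4 / θ * (1 + Real.log L) := by
    intro m _
    apply apSum θ (β - m) J hθ hJ L
      (hdiam := by
        intro k hk k' hk'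
        obtain ⟨h1, h2⟩ := hs k (Finset.mem_filter.mp hk).1
        obtain ⟨h3, h4⟩ := hs k' (Finset.mem_filter.mp hk').1
        omega)
      (hg0 := hg0) (hgJ := hgJ)
    · intro k hk hpos
      have hround : round ((k : ℝ) * θ + β) = m := (Finset.mem_filter.mp hk).2
      have heq : (k : ℝ) * θ + (β - m) = ((k : ℝ) * θ + β) - m := by ring
      have hnint : nint ((k : ℝ) * θ + β) = |(k : ℝ) * θ + (β - m)| := by
        rw [nint, hround, heq]
      rw [← hnint]
      rw [← hnint] at hpos
      exact hginv k (Finset.mem_filter.mp hk).1 hpos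
  calc ∑ m ∈ Finset.Icc (m0 - 1) (m0 + 3), ∑ k ∈ s.filter (fun k : ℤ => round ((k : ℝ) * θ + β) = m), g k
      ≤ ∑ m ∈ Finset.Icc (m0 - 1) (m0 + 3), (J + 4 / θ * (1 + Real.log L)) :=
        Finset.sum_le_sum hbound
    _ = 5 * (J + 4 / θ * (1 + Real.log L)) := by
        rw [Finset.sum_const, Int.card_Icc]
        have h5 : m0 + 3 + 1 - (m0 - 1) = 5 := by ring
        rw [h5]
        rw [nsmul_eq_mul]
        have : ((5:ℤ).toNat : ℝ) = 5 := by rfl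
        rw [this]
lemma rho_pos : 0 < Real.exp (-(π/32)) := Real.exp_pos _

lemma rho_lt_one : Real.exp (-(π/32)) < 1 := by
  apply Real.exp_lt_one_iff.mpr
  have := pi_pos
  linarith

lemma summable_rho_natAbs : Summable (fun r : ℤ => Real.exp (-(π/32)) ^ r.natAbs) := by
  apply Summable.of_nat_of_neg
  · simpa using summable_geometric_of_lt_one rho_pos.le rho_lt_one
  · simpa using summable_geometric_of_lt_one rho_pos.le rho_lt_one

set_option maxHeartbeats 1000000 in
lemma F_le (p : ℕ) (hp : 0 < p) (k : ℤ) (hk : 2 * |k| ≤ (p : ℤ)) (x : ℝ) (hx : 1 ≤ x) :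
    F p k x ≤ (3 * (1 - Real.exp (-(π/32)))⁻¹) * Real.exp (-(π/2) * ((k : ℝ)/p)^2 * x^2) := by
  set ρ : ℝ := Real.exp (-(π/32)) with hρdef
  have hρ0 : 0 < ρ := rho_pos
  have hρ1 : ρ < 1 := rho_lt_one
  clear_value ρ
  set q : ℝ := (k : ℝ) / p with hq
  clear_value q
  have hpp : (0:ℝ) < p := by exact_mod_cast hp
  have hkr : |(k : ℝ)| ≤ (p : ℝ) / 2 := by
    have h : ((2 * |k| : ℤ) : ℝ) ≤ ((p:ℤ) : ℝ) := by exact_mod_cast hk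
    push_cast at h
    linarith
  have habsq : |q| ≤ 1/2 := by
    rw [hq, abs_div, abs_of_pos hpp, div_le_iff₀ hpp]
    linarith
  have hq2 : q^2 ≤ 1/4 := by nlinarith [sq_abs q, abs_nonneg q]
  have hx2 : 1 ≤ x^2 := by nlinarith
  set A : ℝ := Real.exp (-(π/2) * q^2 * x^2) with hA
  have hA0 : 0 < A := Real.exp_pos _
  clear_value A
  have hpoint : ∀ r : ℤ, Real.exp (-π * (q + r) ^ 2 * x ^ 2) ≤ A * ρ ^ r.natAbs := by
    intro r
    have hrw : A * ρ ^ r.natAbs = Real.exp (-(π/2) * q^2 * x^2 + -(π/32) * r.natAbs) := by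
      rw [Real.exp_add, hA, hρdef, ← Real.exp_nat_mul]
      ring_nf
    rw [hrw, Real.exp_le_exp]
    rcases eq_or_ne r 0 with rfl | hr
    · simp
      nlinarith [pi_pos, mul_nonneg (sq_nonneg q) (sq_nonneg x)]
    · have ht1 : (1:ℝ) ≤ (r.natAbs : ℝ) := by
        have : 1 ≤ r.natAbs := by omega
        exact_mod_cast this
      set t : ℝ := (r.natAbs : ℝ) with htdef
      clear_value t
      have habs : |(r : ℝ)| = t := by
        rw [htdef, Nat.cast_natAbs, Int.cast_abs]
      have hqr : (t - 1/2)^2 ≤ (q + r)^2 := by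
        have h1 : |(r:ℝ)| - |q| ≤ |q + (r:ℝ)| := by
          have h := abs_add_le (q + (r:ℝ)) (-q)
          rw [abs_neg] at h
          have he : q + (r:ℝ) + -q = (r:ℝ) := by ring
          rw [he] at h
          linarith
        have h3 : t - 1/2 ≤ |q + (r:ℝ)| := by rw [← habs]; linarith
        have h4 : (0:ℝ) ≤ t - 1/2 := by linarith
        nlinarith [sq_abs (q + (r:ℝ)), abs_nonneg (q + (r:ℝ))]
      have hkey : q^2/2 + t/32 ≤ (t - 1/2)^2 := by nlinarith [sq_nonneg (t - 1)]
      have hπ := pi_pos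
      have hstep : q^2/2 + t/32 ≤ (q + r)^2 := le_trans hkey hqr
      have h5 : (q^2/2 + t/32) * x^2 ≤ (q + r)^2 * x^2 :=
        mul_le_mul_of_nonneg_right hstep (sq_nonneg x)
      have h6 : q^2/2 * x^2 + t/32 ≤ (q^2/2 + t/32) * x^2 := by
        nlinarith [mul_nonneg (by linarith : (0:ℝ) ≤ t) (by linarith : (0:ℝ) ≤ x^2 - 1)]
      have hfin : q^2/2 * x^2 + t/32 ≤ (q + r)^2 * x^2 := le_trans h6 h5
      have hm := mul_le_mul_of_nonneg_left hfin hπ.le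
      linarith
  have hsum_maj : Summable (fun r : ℤ => A * ρ ^ r.natAbs) := by
    rw [hρdef]
    exact (summable_rho_natAbs).mul_left A
  have hsum_lhs : Summable (fun r : ℤ => Real.exp (-π * (q + r) ^ 2 * x ^ 2)) :=
    Summable.of_nonneg_of_le (fun r => (Real.exp_pos _).le) hpoint hsum_maj
  have hFdef : F p k x = ∑' r : ℤ, Real.exp (-π * (q + r) ^ 2 * x ^ 2) := by rw [F, ← hq]
  rw [hFdef]
  have h1 : ∑' r : ℤ, Real.exp (-π * (q + r) ^ 2 * x ^ 2) ≤ ∑' r : ℤ, A * ρ ^ r.natAbs :=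
    Summable.tsum_le_tsum hpoint hsum_lhs hsum_maj
  have h2 : ∑' r : ℤ, A * ρ ^ r.natAbs = A * ∑' r : ℤ, ρ ^ r.natAbs := tsum_mul_left
  have h3 : ∑' r : ℤ, ρ ^ r.natAbs ≤ 3 * (1 - ρ)⁻¹ := by
    have hnat : Summable (fun n : ℕ => ρ ^ ((n:ℤ)).natAbs) := by
      simpa using summable_geometric_of_lt_one hρ0.le hρ1
    have hneg : Summable (fun n : ℕ => ρ ^ ((-(n:ℤ))).natAbs) := by
      simpa using summable_geometric_of_lt_one hρ0.le hρ1
    have heq := Summable.tsum_of_nat_of_neg (f := fun r : ℤ => ρ ^ r.natAbs) hnat hneg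
    rw [heq]
    have e1 : ∑' n : ℕ, ρ ^ ((n:ℤ)).natAbs = (1 - ρ)⁻¹ := by
      simpa using tsum_geometric_of_lt_one hρ0.le hρ1
    have e2 : ∑' n : ℕ, ρ ^ ((-(n:ℤ))).natAbs = (1 - ρ)⁻¹ := by
      simpa using tsum_geometric_of_lt_one hρ0.le hρ1
    rw [e1, e2]
    have hinv : 0 < (1 - ρ)⁻¹ := inv_pos.mpr (by linarith)
    simp only [Int.natAbs_zero, pow_zero]
    linarith
  calc ∑' r : ℤ, Real.exp (-π * (q + r) ^ 2 * x ^ 2) ≤ A * ∑' r : ℤ, ρ ^ r.natAbs := by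
        rw [← h2]; exact h1
    _ ≤ A * (3 * (1 - ρ)⁻¹) := mul_le_mul_of_nonneg_left h3 hA0.le
    _ = (3 * (1 - ρ)⁻¹) * A := by ring
set_option maxHeartbeats 1000000 in
lemma gaussWeightSum (u : ℝ) (hu : 0 < u) (hu1 : u ≤ 1) (P : ℕ) :
    ∑ n ∈ Finset.Icc (-(P:ℤ)) (P:ℤ), Real.exp (-(π/2) * (((n.natAbs - 1 : ℕ)) : ℝ)^2 * u^2)
      ≤ (2 * Real.exp π * (1 + 2/π)) / u := by
  classical
  have hπ := pi_pos
  set ρ : ℝ := Real.exp (-(π/2) * u) with hρdef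
  have hρ0 : 0 < ρ := Real.exp_pos _
  have hρ1 : ρ < 1 := by rw [hρdef]; apply Real.exp_lt_one_iff.mpr; nlinarith
  set f : ℕ → ℝ := fun d => Real.exp (-(π/2) * (((d - 1 : ℕ)) : ℝ)^2 * u^2) with hf
  have hf0 : ∀ d, 0 ≤ f d := fun d => (Real.exp_pos _).le
  have hfb : ∀ d : ℕ, f d ≤ Real.exp π * ρ ^ d := by
    intro d
    have hrw : Real.exp π * ρ ^ d = Real.exp (π + -(π/2) * u * d) := by
      rw [Real.exp_add, hρdef, ← Real.exp_nat_mul]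
      ring_nf
    rw [hf, hrw, Real.exp_le_exp]
    set j : ℕ := d - 1 with hj
    have hdj : (d:ℝ) ≤ (j:ℝ) + 1 := by
      have : d ≤ j + 1 := by omega
      exact_mod_cast this
    have hj0 : (0:ℝ) ≤ (j:ℝ) := Nat.cast_nonneg j
    have hju : (j:ℝ) * u ≤ 1 + ((j:ℝ) * u)^2 := by nlinarith [sq_nonneg ((j:ℝ)*u - 1)]
    have key : ((j:ℝ) + 1) * u - (j:ℝ)^2 * u^2 ≤ 2 := by nlinarith
    have hd0 : (0:ℝ) ≤ (d:ℝ) := Nat.cast_nonneg d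
    nlinarith [mul_le_mul_of_nonneg_left hdj (by positivity : (0:ℝ) ≤ (π/2) * u)]
  -- geometric bound
  have hgeom : ∀ Q : Finset ℕ, ∑ d ∈ Q, f d ≤ Real.exp π * (1 - ρ)⁻¹ := by
    intro Q
    have hsummable : Summable (fun d : ℕ => Real.exp π * ρ ^ d) :=
      (summable_geometric_of_lt_one hρ0.le hρ1).mul_left _
    calc ∑ d ∈ Q, f d ≤ ∑ d ∈ Q, Real.exp π * ρ ^ d := Finset.sum_le_sum (fun d _ => hfb d)
      _ ≤ ∑' d : ℕ, Real.exp π * ρ ^ d :=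
          Summable.sum_le_tsum Q (fun d _ => by positivity) hsummable
      _ = Real.exp π * (1 - ρ)⁻¹ := by
          rw [tsum_mul_left, tsum_geometric_of_lt_one hρ0.le hρ1]
  have hpartbound : ∀ s : Finset ℤ,
      (∀ n ∈ s, ∀ n' ∈ s, n.natAbs = n'.natAbs → n = n') →
      (∀ n ∈ s, n.natAbs ≤ P) →
      ∑ n ∈ s, f n.natAbs ≤ Real.exp π * (1 - ρ)⁻¹ := by
    intro s hinj hle
    calc ∑ n ∈ s, f n.natAbs = ∑ d ∈ s.image Int.natAbs, f d :=
          (Finset.sum_image (f := f) hinj).symm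
      _ ≤ Real.exp π * (1 - ρ)⁻¹ := hgeom _
  have hsplit : ∑ n ∈ Finset.Icc (-(P:ℤ)) (P:ℤ), f n.natAbs ≤ 2 * (Real.exp π * (1 - ρ)⁻¹) := by
    rw [← Finset.sum_filter_add_sum_filter_not (Finset.Icc (-(P:ℤ)) (P:ℤ)) (fun n => 0 ≤ n)]
    have e1 := hpartbound ((Finset.Icc (-(P:ℤ)) (P:ℤ)).filter (fun n => 0 ≤ n))
      (by intro n hn n' hn' h
          have h1 := (Finset.mem_filter.mp hn).2
          have h2 := (Finset.mem_filter.mp hn').2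
          omega)
      (by intro n hn
          have h1 := Finset.mem_Icc.mp (Finset.mem_filter.mp hn).1
          omega)
    have e2 := hpartbound ((Finset.Icc (-(P:ℤ)) (P:ℤ)).filter (fun n => ¬ 0 ≤ n))
      (by intro n hn n' hn' h
          have h1 := (Finset.mem_filter.mp hn).2
          have h2 := (Finset.mem_filter.mp hn').2
          omega)
      (by intro n hn
          have h1 := Finset.mem_Icc.mp (Finset.mem_filter.mp hn).1
          omega)
    linarith
  have hinvρ : (1 - ρ)⁻¹ ≤ (1 + 2/π) / u := by
    set t : ℝ := (π/2) * u with ht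
    have ht0 : 0 < t := by positivity
    have hexp : ρ ≤ (1 + t)⁻¹ := by
      rw [hρdef, ht]
      rw [neg_mul, Real.exp_neg]
      apply inv_anti₀ (by positivity)
      have := Real.add_one_le_exp ((π/2) * u)
      linarith
    have h1ρ : t / (1 + t) ≤ 1 - ρ := by
      have : (1:ℝ) - (1+t)⁻¹ = t / (1+t) := by field_simp; ring
      linarith [this ▸ sub_le_sub_left hexp 1]
    have hpos : 0 < t / (1 + t) := by positivity
    calc (1 - ρ)⁻¹ ≤ (t / (1 + t))⁻¹ := inv_anti₀ hpos h1ρ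
      _ = (1 + t) / t := by rw [inv_div]
      _ = 1/t + 1 := by field_simp
      _ = 2/(π * u) + 1 := by rw [ht]; ring_nf
      _ ≤ 2/(π * u) + 1/u := by
          have : (1:ℝ) ≤ 1/u := by rw [le_div_iff₀ hu]; linarith
          linarith
      _ = (1 + 2/π) / u := by field_simp; ring
  calc ∑ n ∈ Finset.Icc (-(P:ℤ)) (P:ℤ), Real.exp (-(π/2) * (((n.natAbs - 1 : ℕ)) : ℝ)^2 * u^2)
      = ∑ n ∈ Finset.Icc (-(P:ℤ)) (P:ℤ), f n.natAbs := rfl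
    _ ≤ 2 * (Real.exp π * (1 - ρ)⁻¹) := hsplit
    _ ≤ 2 * (Real.exp π * ((1 + 2/π) / u)) := by
        have he := Real.exp_pos π
        apply mul_le_mul_of_nonneg_left _ (by norm_num : (0:ℝ) ≤ 2)
        exact mul_le_mul_of_nonneg_left hinvρ he.le
    _ = (2 * Real.exp π * (1 + 2/π)) / u := by ring
set_option maxHeartbeats 2000000 in
theorem F_min_sum_bound :
    ∃ C > 0, ∀ (p : ℕ), p.Prime → Odd p → ∀ (X x : ℝ), 1 ≤ x → x ≤ X → X ≤ p →
      ∀ (J : ℕ), 1 ≤ J → ∀ (β : ℝ),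
      ∑ k ∈ Finset.Icc (-(((p : ℤ) - 1) / 2)) (((p : ℤ) - 1) / 2),
          F p k x * (if ∃ m : ℤ, (k : ℝ) * X / p + β = m then (J : ℝ)
            else min ((nint ((k : ℝ) * X / p + β))⁻¹) (J : ℝ))
        ≤ C * (X / x * J + (p : ℝ) / x * Real.log p) := by
  classical
  have hρ1 := rho_lt_one
  set C₁ : ℝ := 3 * (1 - Real.exp (-(π/32)))⁻¹ with hC₁
  set C₂ : ℝ := 2 * Real.exp π * (1 + 2/π) with hC₂
  have hC₁0 : 0 < C₁ := by
    apply mul_pos (by norm_num)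
    exact inv_pos.mpr (by linarith)
  have hC₂0 : 0 < C₂ := by
    have := Real.exp_pos π
    have := pi_pos
    positivity
  refine ⟨60 * C₁ * C₂, by positivity, ?_⟩
  intro p hp hodd X x hx hxX hXp J hJ β
  have hp3 : 3 ≤ p := by
    obtain ⟨m, hm⟩ := hodd
    have := hp.two_le
    omega
  have hp0 : (0:ℝ) < p := by exact_mod_cast (by omega : 0 < p)
  have hp3R : (3:ℝ) ≤ p := by exact_mod_cast hp3
  have hx0 : (0:ℝ) < x := by linarith
  have hX1 : (1:ℝ) ≤ X := le_trans hx hxX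
  have hX0 : (0:ℝ) < X := by linarith
  have hJ1 : (1:ℝ) ≤ (J:ℝ) := by exact_mod_cast hJ
  have hJ0 : (0:ℝ) ≤ (J:ℝ) := by linarith
  set θ : ℝ := X / p with hθdef
  have hθ0 : 0 < θ := by positivity
  set L : ℕ := ⌊(p:ℝ)/X⌋₊ + 1 with hLdef
  have hL0 : 0 < (L:ℝ) := by positivity
  have hLp : (p:ℝ)/X ≤ (L:ℝ) := by
    rw [hLdef]
    push_cast
    exact (Nat.lt_floor_add_one _).le
  have hLup : (L:ℝ) ≤ (p:ℝ)/X + 1 := by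
    rw [hLdef]
    push_cast
    have := Nat.floor_le (by positivity : (0:ℝ) ≤ (p:ℝ)/X)
    linarith
  have hLθ : (L:ℝ) * θ ≤ 2 := by
    rw [hθdef]
    have h1 : (L:ℝ) * (X/p) ≤ ((p:ℝ)/X + 1) * (X/p) :=
      mul_le_mul_of_nonneg_right hLup (by positivity)
    have h2 : ((p:ℝ)/X + 1) * (X/p) = 1 + X/p := by field_simp
    have h3 : X/p ≤ 1 := by rw [div_le_one hp0]; exact hXp
    linarith
  have hpLX : (p:ℝ) ≤ (L:ℝ) * X := by
    have := mul_le_mul_of_nonneg_right hLp hX0.le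
    rw [div_mul_cancel₀] at this
    · linarith
    · linarith
  have hlogp1 : 1 ≤ Real.log p := by
    rw [Real.le_log_iff_exp_le hp0]
    have h9 := Real.exp_one_lt_d9
    calc Real.exp 1 ≤ 2.7182818286 := h9.le
      _ ≤ 3 := by norm_num
      _ ≤ p := hp3R
  have hlogL : Real.log L ≤ 2 * Real.log p := by
    have hLle : (L:ℝ) ≤ (p:ℝ)^2 := by
      have h1 : (p:ℝ)/X ≤ p := by
        rw [div_le_iff₀ hX0]
        nlinarith
      nlinarith
    calc Real.log L ≤ Real.log ((p:ℝ)^2) := Real.log_le_log hL0 hLle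
      _ = 2 * Real.log p := by
          rw [Real.log_pow]
          norm_num
  -- the weight functions
  set g : ℤ → ℝ := fun k => if ∃ m : ℤ, (k : ℝ) * X / p + β = m then (J : ℝ)
      else min ((nint ((k : ℝ) * X / p + β))⁻¹) (J : ℝ) with hgdef
  have hzeq : ∀ k : ℤ, (k : ℝ) * X / p + β = (k:ℝ) * θ + β := by
    intro k
    rw [hθdef]
    ring
  have hg0 : ∀ k, 0 ≤ g k := by
    intro k
    rw [hgdef]
    dsimp only
    split
    · exact hJ0
    · exact le_min (inv_nonneg.mpr (abs_nonneg _)) hJ0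
  have hgJ : ∀ k, g k ≤ (J:ℝ) := by
    intro k
    rw [hgdef]
    dsimp only
    split
    · exact le_refl _
    · exact min_le_right _ _
  have hginv : ∀ k : ℤ, 0 < nint ((k:ℝ) * θ + β) → g k ≤ (nint ((k:ℝ) * θ + β))⁻¹ := by
    intro k hpos
    rw [hgdef]
    dsimp only
    rw [← hzeq k] at hpos ⊢
    split
    · rename_i hc
      obtain ⟨m, hm⟩ := hc
      rw [nint, hm] at hpos
      simp [round_intCast] at hpos
    · exact min_le_left _ _
  set w : ℤ → ℝ := fun k => Real.exp (-(π/2) * ((k:ℝ)/p)^2 * x^2) with hwdef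
  set W : ℤ → ℝ := fun n => Real.exp (-(π/2) * (((n.natAbs - 1 : ℕ)) : ℝ)^2 * (x/X)^2)
    with hWdef
  set M : ℤ := ((p:ℤ) - 1)/2 with hMdef
  set K : Finset ℤ := Finset.Icc (-M) M with hKdef
  have habsk : ∀ k ∈ K, 2 * |k| ≤ (p:ℤ) := by
    intro k hk
    rw [hKdef, Finset.mem_Icc] at hk
    have h1 : |k| ≤ M := abs_le.mpr ⟨hk.1, hk.2⟩
    have h2 : 2 * M ≤ (p:ℤ) := by rw [hMdef]; omega
    linarith
  have hFw : ∀ k ∈ K, F p k x ≤ C₁ * w k := by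
    intro k hk
    exact F_le p (by omega) k (habsk k hk) x hx
  -- step 1
  have step1 : ∑ k ∈ K, F p k x * g k ≤ C₁ * ∑ k ∈ K, w k * g k := by
    rw [Finset.mul_sum]
    apply Finset.sum_le_sum
    intro k hk
    calc F p k x * g k ≤ (C₁ * w k) * g k :=
          mul_le_mul_of_nonneg_right (hFw k hk) (hg0 k)
      _ = C₁ * (w k * g k) := by ring
  -- fiber decomposition
  set φ : ℤ → ℤ := fun k => k / (L:ℤ) with hφdef
  set T : Finset ℤ := Finset.Icc (-(p:ℤ)) (p:ℤ) with hTdef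
  have hLZ : (0:ℤ) < (L:ℤ) := by exact_mod_cast Nat.succ_pos _
  have hfibmem : ∀ k : ℤ, ∀ n : ℤ, φ k = n → n * L ≤ k ∧ k < n * L + L := by
    intro k n hn
    have heq := Int.mul_ediv_add_emod k (L:ℤ)
    have h1 := Int.emod_nonneg k (by omega : (L:ℤ) ≠ 0)
    have h2 := Int.emod_lt_of_pos k hLZ
    rw [hφdef] at hn
    simp only at hn
    rw [hn] at heq
    constructor
    · nlinarith [heq]
    · nlinarith [heq]
  have hmaps : ∀ k ∈ K, φ k ∈ T := by
    intro k hk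
    obtain ⟨h1, h2⟩ := hfibmem k (φ k) rfl
    rw [hKdef, Finset.mem_Icc] at hk
    rw [hMdef] at hk
    rw [hTdef, Finset.mem_Icc]
    set n := φ k with hn
    constructor
    · by_contra hcon
      push_neg at hcon
      have hn1 : n + 1 ≤ -(p:ℤ) := by omega
      have : n * L + L = (n+1) * L := by ring
      have hk2 : k < (n+1) * L := by omega
      have : (n+1) * L ≤ (n+1) * 1 := by
        apply mul_le_mul_of_nonpos_left _ (by omega : n + 1 ≤ 0)
        omega
      omega
    · by_contra hcon
      push_neg at hcon
      have hn1 : (p:ℤ) + 1 ≤ n := by omega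
      have : n * 1 ≤ n * L := by
        apply mul_le_mul_of_nonneg_left _ (by omega : (0:ℤ) ≤ n)
        omega
      omega
  have hfiber := Finset.sum_fiberwise_of_maps_to hmaps (fun k => w k * g k)
  -- per fiber bound
  set B0 : ℝ := 5 * ((J:ℝ) + 4/θ * (1 + Real.log L)) with hB0def
  have hB00 : 0 ≤ B0 := by
    have hlogL0 : (0:ℝ) ≤ Real.log L := by
      apply Real.log_nonneg
      exact_mod_cast Nat.one_le_iff_ne_zero.mpr (by omega)
    have : 0 < 4/θ := by positivity
    nlinarith
  have hinner : ∀ n ∈ T, ∑ k ∈ K.filter (fun k => φ k = n), w k * g k ≤ W n * B0 := by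
    intro n _
    set s := K.filter (fun k => φ k = n) with hsdef
    have hsub : ∀ k ∈ s, n * L ≤ k ∧ k < n * L + L := by
      intro k hk
      exact hfibmem k n (Finset.mem_filter.mp hk).2
    -- weight bound on fiber
    have hwW : ∀ k ∈ s, w k ≤ W n := by
      intro k hk
      obtain ⟨h1, h2⟩ := hsub k hk
      set ν : ℝ := (((n.natAbs - 1 : ℕ)) : ℝ) with hνdef
      have hν0 : 0 ≤ ν := Nat.cast_nonneg _
      have hk1 : (n:ℝ) * L ≤ (k:ℝ) := by exact_mod_cast h1
      have hk2 : (k:ℝ) < (n:ℝ) * L + L := by exact_mod_cast h2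
      have hν : ν * (p:ℝ) ≤ |(k:ℝ)| * X := by
        rcases lt_trichotomy n 0 with hneg | hzero | hposn
        · -- n ≤ -1
          have hνint : ((n.natAbs - 1 : ℕ) : ℤ) = -n - 1 := by omega
          have hνR : ν = -(n:ℝ) - 1 := by
            rw [hνdef]
            exact_mod_cast congrArg (Int.cast : ℤ → ℝ) hνint
          have hkneg : (k:ℝ) < 0 := by
            have hn1 : (n:ℝ) + 1 ≤ 0 := by
              have : n + 1 ≤ 0 := by omega
              exact_mod_cast this
            nlinarith
          rw [abs_of_neg hkneg]
          have hnk : ν * (L:ℝ) ≤ -(k:ℝ) := by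
            rw [hνR]
            nlinarith
          calc ν * (p:ℝ) ≤ ν * ((L:ℝ) * X) := mul_le_mul_of_nonneg_left hpLX hν0
            _ = (ν * L) * X := by ring
            _ ≤ -(k:ℝ) * X := mul_le_mul_of_nonneg_right hnk hX0.le
        · -- n = 0
          have : ν = 0 := by
            rw [hνdef, hzero]
            norm_num
          rw [this]
          have := abs_nonneg (k:ℝ)
          nlinarith
        · -- n ≥ 1
          have hνint : ((n.natAbs - 1 : ℕ) : ℤ) = n - 1 := by omega
          have hνR : ν = (n:ℝ) - 1 := by
            rw [hνdef]
            exact_mod_cast congrArg (Int.cast : ℤ → ℝ) hνint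
          have hn1 : (1:ℝ) ≤ (n:ℝ) := by exact_mod_cast hposn
          have hkpos : (0:ℝ) < (k:ℝ) := by nlinarith
          rw [abs_of_pos hkpos]
          have hnk : ν * (L:ℝ) ≤ (k:ℝ) := by
            rw [hνR]
            nlinarith
          calc ν * (p:ℝ) ≤ ν * ((L:ℝ) * X) := mul_le_mul_of_nonneg_left hpLX hν0
            _ = (ν * L) * X := by ring
            _ ≤ (k:ℝ) * X := mul_le_mul_of_nonneg_right hnk hX0.le
      -- convert to exponent inequality
      rw [hwdef, hWdef]
      simp only
      rw [Real.exp_le_exp]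
      have h1 : ν / X ≤ |(k:ℝ)| / p := by
        rw [div_le_div_iff₀ hX0 hp0]
        exact hν
      have h2 : (ν/X)^2 ≤ (|(k:ℝ)|/p)^2 :=
        pow_le_pow_left₀ (by positivity) h1 2
      have h3 : (|(k:ℝ)|/p)^2 = ((k:ℝ)/p)^2 := by
        rw [div_pow, div_pow, sq_abs]
      have h4 : ν^2 * (x/X)^2 = (ν/X)^2 * x^2 := by ring
      have h5 : ν^2 * (x/X)^2 ≤ ((k:ℝ)/p)^2 * x^2 := by
        rw [h4, ← h3]
        exact mul_le_mul_of_nonneg_right h2 (sq_nonneg x)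
      have hπ2 : (0:ℝ) ≤ π/2 := by positivity
      nlinarith [mul_le_mul_of_nonneg_left h5 hπ2]
    have hgB : ∑ k ∈ s, g k ≤ B0 := by
      have hw := windowSum θ β (J:ℝ) hθ0 hJ0 L hLθ (n * L) s hsub g hg0 hgJ
        (fun k _ => hginv k)
      rw [hB0def]
      exact hw
    have hWn0 : 0 ≤ W n := (Real.exp_pos _).le
    calc ∑ k ∈ s, w k * g k ≤ ∑ k ∈ s, W n * g k :=
          Finset.sum_le_sum (fun k hk => mul_le_mul_of_nonneg_right (hwW k hk) (hg0 k))
      _ = W n * ∑ k ∈ s, g k := by rw [Finset.mul_sum]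
      _ ≤ W n * B0 := mul_le_mul_of_nonneg_left hgB hWn0
  -- sum over fibers
  have step2 : ∑ k ∈ K, w k * g k ≤ (∑ n ∈ T, W n) * B0 := by
    rw [← hfiber]
    calc ∑ n ∈ T, ∑ k ∈ K.filter (fun k => φ k = n), w k * g k
        ≤ ∑ n ∈ T, W n * B0 := Finset.sum_le_sum hinner
      _ = (∑ n ∈ T, W n) * B0 := by rw [Finset.sum_mul]
  have hu0 : 0 < x/X := by positivity
  have hu1 : x/X ≤ 1 := by rw [div_le_one hX0]; exact hxX
  have step3 : ∑ n ∈ T, W n ≤ C₂ / (x/X) := by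
    have := gaussWeightSum (x/X) hu0 hu1 p
    rw [hTdef, hWdef, hC₂]
    exact this
  have hC2x : C₂ / (x/X) = C₂ * (X/x) := by
    rw [div_div_eq_mul_div]
    ring
  -- arithmetic on B0
  have hθ4 : 4/θ = 4*((p:ℝ)/X) := by
    rw [hθdef]
    field_simp
  have h1L : 1 + Real.log L ≤ 3 * Real.log p := by linarith
  have hB0le : B0 ≤ 5*(J:ℝ) + 60*((p:ℝ)/X)*Real.log p := by
    have h4θ : 4/θ*(1 + Real.log L) ≤ 12*((p:ℝ)/X*Real.log p) := by
      rw [hθ4]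
      have hpX0 : (0:ℝ) ≤ 4*((p:ℝ)/X) := by positivity
      nlinarith [mul_le_mul_of_nonneg_left h1L hpX0]
    rw [hB0def]
    nlinarith
  -- final combination
  have hlogp0 : 0 ≤ Real.log p := by linarith
  have hXx0 : (0:ℝ) < X/x := by positivity
  have hpx : (X/x)*((p:ℝ)/X * Real.log p) = (p:ℝ)/x * Real.log p := by
    field_simp
  have hterm0 : (0:ℝ) ≤ X/x*(J:ℝ) := by positivity
  have hgoalrfl : ∑ k ∈ Finset.Icc (-M) M,
      F p k x * (if ∃ m : ℤ, (k : ℝ) * X / p + β = m then (J : ℝ)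
        else min ((nint ((k : ℝ) * X / p + β))⁻¹) (J : ℝ)) = ∑ k ∈ K, F p k x * g k := rfl
  rw [hgoalrfl]
  have hWsum0 : 0 ≤ ∑ n ∈ T, W n :=
    Finset.sum_nonneg (fun n _ => (Real.exp_pos _).le)
  calc ∑ k ∈ K, F p k x * g k ≤ C₁ * ∑ k ∈ K, w k * g k := step1
    _ ≤ C₁ * ((∑ n ∈ T, W n) * B0) := mul_le_mul_of_nonneg_left step2 hC₁0.le
    _ ≤ C₁ * ((C₂ * (X/x)) * B0) := by
        apply mul_le_mul_of_nonneg_left _ hC₁0.le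
        apply mul_le_mul_of_nonneg_right _ hB00
        rw [← hC2x]
        exact step3
    _ ≤ C₁ * ((C₂ * (X/x)) * (5*(J:ℝ) + 60*((p:ℝ)/X)*Real.log p)) := by
        apply mul_le_mul_of_nonneg_left _ hC₁0.le
        apply mul_le_mul_of_nonneg_left hB0le (by positivity)
    _ = C₁ * C₂ * (5*(X/x*(J:ℝ)) + 60*((X/x)*((p:ℝ)/X * Real.log p))) := by ring
    _ = C₁ * C₂ * (5*(X/x*(J:ℝ)) + 60*((p:ℝ)/x * Real.log p)) := by rw [hpx]
    _ ≤ C₁ * C₂ * (60*(X/x*(J:ℝ)) + 60*((p:ℝ)/x * Real.log p)) := by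
        apply mul_le_mul_of_nonneg_left _ (by positivity)
        nlinarith
    _ = 60 * C₁ * C₂ * (X / x * (J:ℝ) + (p:ℝ) / x * Real.log p) := by ring
end
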